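/- Let (e,f) be a local BMW pair in A. Then κ_e·κ_f·κ_e = κ_e and κ_f·κ_e·κ_f = κ_f. -/

import Mathlib

namespace BMWPaper

noncomputable section

/-- `κ_u := λ⁻¹ ν⁻¹ (q - u)(q⁻¹ + u)` for an invertible element `u` of a ℂ-algebra,
where `λ := q - q⁻¹`. -/
def kap (q ν : ℂ) {A : Type*} [Ring A] [Algebra ℂ A] (u : Aˣ) : A :=
  ((q - q⁻¹)⁻¹ * ν⁻¹) • ((q • (1 : A) - (u : A)) * (q⁻¹ • (1 : A) + (u : A)))

/-- `μ := λ⁻¹ ν⁻¹ (q - ν)(q⁻¹ + ν)`. -/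
def muBMW (q ν : ℂ) : ℂ := ((q - q⁻¹)⁻¹ * ν⁻¹) * ((q - ν) * (q⁻¹ + ν))

/-- A local BMW pair `(e, f)` of invertible elements of a ℂ-algebra `A`:
`efe = fef`, `e κ_e = κ_e e = ν κ_e`, `f κ_f = κ_f f = ν κ_f`,
`κ_f e κ_f = ν⁻¹ κ_f` and `κ_f e⁻¹ κ_f = ν κ_f`. -/
def LocalBMWPair (q ν : ℂ) {A : Type*} [Ring A] [Algebra ℂ A] (e f : Aˣ) : Prop :=
  (e : A) * f * e = (f : A) * e * f ∧
  (e : A) * kap q ν e = ν • kap q ν e ∧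
  kap q ν e * e = ν • kap q ν e ∧
  (f : A) * kap q ν f = ν • kap q ν f ∧
  kap q ν f * f = ν • kap q ν f ∧
  kap q ν f * e * kap q ν f = ν⁻¹ • kap q ν f ∧
  kap q ν f * (↑e⁻¹ : A) * kap q ν f = ν • kap q ν f

/-- for a local BMW pair `(e,f)`:
`κ_e κ_f κ_e = κ_e` and `κ_f κ_e κ_f = κ_f`. -/
lemma kap_linear (q ν : ℂ) (hq0 : q ≠ 0) (hlam : q - q⁻¹ ≠ 0) (hν0 : ν ≠ 0)
    {A : Type*} [Ring A] [Algebra ℂ A] (u : Aˣ)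
    (hu : kap q ν u * ↑u = ν • kap q ν u) :
    (q - q⁻¹) • kap q ν u = (↑u⁻¹ : A) + (q - q⁻¹) • (1 : A) - ↑u := by
  have h1 : ν • (kap q ν u * ↑u⁻¹) = kap q ν u := by
    calc ν • (kap q ν u * ↑u⁻¹) = (ν • kap q ν u) * ↑u⁻¹ := by rw [smul_mul_assoc]
    _ = kap q ν u * ↑u * ↑u⁻¹ := by rw [hu]
    _ = kap q ν u := by rw [mul_assoc, Units.mul_inv, mul_one]
  have h2 : kap q ν u * ↑u⁻¹ = ν⁻¹ • kap q ν u := by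
    have h2' : ν⁻¹ • (ν • (kap q ν u * ↑u⁻¹)) = ν⁻¹ • kap q ν u :=
      congrArg (fun x => ν⁻¹ • x) h1
    rw [smul_smul, inv_mul_cancel₀ hν0, one_smul] at h2'
    exact h2'
  have h3 : ((q - q⁻¹) * ν) • kap q ν u
      = (q • (1 : A) - (u : A)) * (q⁻¹ • (1 : A) + (u : A)) := by
    rw [kap, smul_smul,
      show (q - q⁻¹)⁻¹ * ν⁻¹ = ((q - q⁻¹) * ν)⁻¹ from (mul_inv _ _).symm,
      mul_inv_cancel₀ (mul_ne_zero hlam hν0), one_smul]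
  have h4 : (q - q⁻¹) • kap q ν u = ((q - q⁻¹) * ν) • (kap q ν u * ↑u⁻¹) := by
    rw [h2, smul_smul]
    congr 1
    field_simp
  rw [h4, ← smul_mul_assoc, h3]
  have hmi : (u : A) * ↑u⁻¹ = 1 := Units.mul_inv u
  have hsq : (u : A) * ↑u * ↑u⁻¹ = ↑u := by rw [mul_assoc, hmi, mul_one]
  simp only [sub_mul, add_mul, mul_add, mul_sub, smul_mul_assoc, mul_smul_comm,
    one_mul, mul_one, smul_smul]
  rw [hmi, hsq]
  simp only [smul_sub, smul_smul]
  rw [inv_mul_cancel₀ hq0]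
  module

theorem stmt3 (q ν : ℂ) (hq0 : q ≠ 0) (hq1 : q ≠ 1) (hqm1 : q ≠ -1)
    (hν0 : ν ≠ 0) (hνq : ν ≠ q) (hνq' : ν ≠ -q⁻¹)
    (A : Type*) [Ring A] [Algebra ℂ A]
    (e f : Aˣ) (h : LocalBMWPair q ν e f) :
    kap q ν e * kap q ν f * kap q ν e = kap q ν e ∧
    kap q ν f * kap q ν e * kap q ν f = kap q ν f := by
  obtain ⟨hbr, heK, hKe, hfK, hKf, hM1, hM2⟩ := h
  set Ke := kap q ν e with hKedef
  set Kf := kap q ν f with hKfdef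
  have hlam : q - q⁻¹ ≠ 0 := by
    intro h0
    have hq2 : (q - 1) * (q + 1) = 0 := by
      field_simp at h0
      linear_combination h0
    rcases mul_eq_zero.mp hq2 with h' | h'
    · exact hq1 (by linear_combination h')
    · exact hqm1 (by linear_combination h')
  have hline := kap_linear q ν hq0 hlam hν0 e hKe
  have hlinf := kap_linear q ν hq0 hlam hν0 f hKf
  -- braid variants
  have hbr' : (e : A) * ((f : A) * (e : A)) = (f : A) * ((e : A) * (f : A)) := by
    simpa [mul_assoc] using hbr
  have hbr2 : (f : A) * ((e : A) * (↑f⁻¹ : A)) = (↑e⁻¹ : A) * ((f : A) * (e : A)) := by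
    have h5 := congrArg (fun x => (↑e⁻¹ : A) * x * (↑f⁻¹ : A)) hbr
    simpa [mul_assoc, Units.mul_inv, Units.inv_mul_cancel_left] using h5
  -- key lemma : f e κ_f = κ_e f e
  have hkey : (f : A) * ((e : A) * Kf) = Ke * ((f : A) * (e : A)) := by
    have hs : (q - q⁻¹) • ((f : A) * ((e : A) * Kf))
        = (q - q⁻¹) • (Ke * ((f : A) * (e : A))) := by
      calc (q - q⁻¹) • ((f : A) * ((e : A) * Kf))
          = (f : A) * ((e : A) * ((q - q⁻¹) • Kf)) := by
            rw [mul_smul_comm, mul_smul_comm]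
        _ = (f : A) * ((e : A) * ((↑f⁻¹ : A) + (q - q⁻¹) • (1 : A) - (f : A))) := by
            rw [hlinf]
        _ = ((↑e⁻¹ : A) + (q - q⁻¹) • (1 : A) - (e : A)) * ((f : A) * (e : A)) := by
            simp only [mul_add, mul_sub, add_mul, sub_mul, mul_smul_comm,
              smul_mul_assoc, mul_one, one_mul, mul_assoc]
            rw [hbr', hbr2]
        _ = ((q - q⁻¹) • Ke) * ((f : A) * (e : A)) := by rw [hline]
        _ = (q - q⁻¹) • (Ke * ((f : A) * (e : A))) := smul_mul_assoc _ _ _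
    have h6 := congrArg (fun x => (q - q⁻¹)⁻¹ • x) hs
    simpa [smul_smul, inv_mul_cancel₀ hlam] using h6
  have hKe_eq : Ke = (f : A) * ((e : A) * (Kf * ((↑e⁻¹ : A) * (↑f⁻¹ : A)))) := by
    have h7 := congrArg (fun x => x * ((↑e⁻¹ : A) * (↑f⁻¹ : A))) hkey
    simp only [mul_assoc] at h7
    rw [show (e : A) * ((↑e⁻¹ : A) * (↑f⁻¹ : A)) = (↑f⁻¹ : A) from
      Units.mul_inv_cancel_left _ _, Units.mul_inv, mul_one] at h7
    exact h7.symm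
  -- eigen helpers
  have hKff : ∀ x : A, Kf * ((f : A) * x) = ν • (Kf * x) := fun x => by
    rw [← mul_assoc, hKf, smul_mul_assoc]
  have hfinvKf : (↑f⁻¹ : A) * Kf = ν⁻¹ • Kf := by
    have h8 : ν • ((↑f⁻¹ : A) * Kf) = Kf := by
      calc ν • ((↑f⁻¹ : A) * Kf) = (↑f⁻¹ : A) * (ν • Kf) := (mul_smul_comm _ _ _).symm
      _ = (↑f⁻¹ : A) * ((f : A) * Kf) := by rw [hfK]
      _ = Kf := Units.inv_mul_cancel_left _ _
    have h9 : ν⁻¹ • (ν • ((↑f⁻¹ : A) * Kf)) = ν⁻¹ • Kf := congrArg (fun x => ν⁻¹ • x) h8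
    rw [smul_smul, inv_mul_cancel₀ hν0, one_smul] at h9
    exact h9
  have hfinvKf_x : ∀ x : A, (↑f⁻¹ : A) * (Kf * x) = ν⁻¹ • (Kf * x) := fun x => by
    rw [← mul_assoc, hfinvKf, smul_mul_assoc]
  have hM1' : ∀ x : A, Kf * ((e : A) * (Kf * x)) = ν⁻¹ • (Kf * x) := fun x => by
    rw [← mul_assoc, ← mul_assoc, hM1, smul_mul_assoc]
  have hM2' : ∀ x : A, Kf * ((↑e⁻¹ : A) * (Kf * x)) = ν • (Kf * x) := fun x => by
    rw [← mul_assoc, ← mul_assoc, hM2, smul_mul_assoc]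
  have hM1'' : Kf * ((e : A) * Kf) = ν⁻¹ • Kf := by rw [← mul_assoc, hM1]
  have hM2'' : Kf * ((↑e⁻¹ : A) * Kf) = ν • Kf := by rw [← mul_assoc, hM2]
  constructor
  · -- Ke * Kf * Ke = Ke
    rw [hKe_eq]
    simp only [mul_assoc]
    rw [hKff, hM1']
    simp only [mul_smul_comm, smul_smul]
    rw [hfinvKf_x]
    simp only [mul_smul_comm, smul_smul]
    rw [hM2']
    simp only [mul_smul_comm, smul_smul]
    norm_num [mul_inv_cancel₀ hν0, inv_mul_cancel₀ hν0]
  · -- Kf * Ke * Kf = Kf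
    rw [hKe_eq]
    simp only [mul_assoc]
    rw [hfinvKf]
    simp only [mul_smul_comm, smul_smul]
    rw [hM2'', hKff]
    simp only [mul_smul_comm, smul_smul]
    rw [hM1'']
    simp only [smul_smul]
    rw [show ν⁻¹ * (ν * ν) * ν⁻¹ = 1 by field_simp, one_smul]


end

end BMWPaper
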